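/- arXiv:1704.05383 — 2 statements merged into one kernel-verified Lean document; each statement's English description precedes it below -/
import Mathlib

section
/- Let L, C ≥ 0 and let ψ : [α, T] → [0, ∞) be continuous satisfying ψ(t) ≤ C + L∫_α^t ψ(s) ds + L∫_α^t ∫_α^s ψ(r) dr ds + L∫_α^t ∫_α^s ∫_α^r ψ(τ) dτ dr ds for all t ∈ [α, T]. Then there exists a constant K depending only on L and T − α (not on C or ψ) such that sup_{t ∈ [α,T]} ψ(t) ≤ K·C. -/
open Set intervalIntegral Real

private lemma aux_gronwall (L : ℝ) (hL : 0 ≤ L) (α T : ℝ) (hαT : α ≤ T)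
    (C : ℝ) (hC : 0 ≤ C) (g : ℝ → ℝ) (hg : Continuous g)
    (hg0 : ∀ t ∈ Icc α T, 0 ≤ g t)
    (hineq : ∀ t ∈ Icc α T, g t ≤ C + L * ∫ s in α..t, g s
        + L * ∫ s in α..t, ∫ r in α..s, g r
        + L * ∫ s in α..t, ∫ r in α..s, ∫ τ in α..r, g τ) :
    ∀ t ∈ Icc α T,
      g t ≤ Real.exp ((L + L ^ 2 * (T - α) ^ 2 + L ^ 3 * (T - α) ^ 5) * (T - α)) * C := by
  set M : ℝ := L + L ^ 2 * (T - α) ^ 2 + L ^ 3 * (T - α) ^ 5 with hM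
  have hTα : 0 ≤ T - α := by linarith
  have hM0 : 0 ≤ M := by positivity
  have hgint : ∀ a b : ℝ, IntervalIntegrable g MeasureTheory.volume a b :=
    fun a b => hg.intervalIntegrable a b
  set I : ℝ → ℝ := fun t => ∫ s in α..t, g s with hIdef
  have hIcont : Continuous I := intervalIntegral.continuous_primitive hgint α
  have hg0' : ∀ t ∈ Icc α T, ∀ s ∈ Set.Icc α t, 0 ≤ g s := fun t ht s hs =>
    hg0 s ⟨hs.1, le_trans hs.2 ht.2⟩
  have hInonneg : ∀ t ∈ Icc α T, 0 ≤ I t := fun t ht =>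
    intervalIntegral.integral_nonneg ht.1 (fun s hs => hg0' t ht s hs)
  have hImono : ∀ t ∈ Icc α T, ∀ s ∈ Icc α t, I s ≤ I t := by
    intro t ht s hs
    have h0 : I t = I s + ∫ u in s..t, g u :=
      (intervalIntegral.integral_add_adjacent_intervals (hgint α s) (hgint s t)).symm
    have h1 : 0 ≤ ∫ u in s..t, g u :=
      intervalIntegral.integral_nonneg hs.2 (fun u hu => hg0' t ht u ⟨le_trans hs.1 hu.1, hu.2⟩)
    rw [h0]; linarith
  -- the key: g ≤ C + M • I, pointwise on [α, T]
  have hchain : ∀ t ∈ Icc α T, g t ≤ C + M * I t := by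
    intro t ht
    have h := hineq t ht
    set Et : ℝ := ∫ s in α..t, ∫ r in α..s, ∫ τ in α..r, g τ with hEt
    -- bound Et
    have hIμint : ∀ a b : ℝ, IntervalIntegrable I MeasureTheory.volume a b :=
      fun a b => hIcont.intervalIntegrable a b
    have hEt0 : 0 ≤ Et := by
      rw [hEt]
      apply intervalIntegral.integral_nonneg ht.1
      intro s hs
      exact intervalIntegral.integral_nonneg hs.1
        (fun r hr => hInonneg r ⟨hr.1, le_trans hr.2 (le_trans hs.2 ht.2)⟩)
    have hEt_le : Et ≤ (T - α) ^ 2 * I t := by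
      rw [hEt]
      calc (∫ s in α..t, ∫ r in α..s, I r)
          ≤ ∫ s in α..t, (T - α) * I t := by
            apply intervalIntegral.integral_mono_on ht.1
              ((intervalIntegral.continuous_primitive hIμint α).intervalIntegrable α t)
              intervalIntegrable_const
            intro s hs
            have hsT : s ∈ Icc α T := ⟨hs.1, le_trans hs.2 ht.2⟩
            calc (∫ r in α..s, I r) ≤ ∫ r in α..s, I t := by
                  apply intervalIntegral.integral_mono_on hs.1
                    (hIμint α s) intervalIntegrable_const
                  intro r hr
                  exact hImono t ht r ⟨hr.1, le_trans hr.2 hs.2⟩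
              _ = (s - α) * I t := by rw [intervalIntegral.integral_const, smul_eq_mul]
              _ ≤ (T - α) * I t :=
                  mul_le_mul_of_nonneg_right (by linarith [hsT.2]) (hInonneg t ht)
        _ = (t - α) * ((T - α) * I t) := by rw [intervalIntegral.integral_const, smul_eq_mul]
        _ ≤ (T - α) ^ 2 * I t := by
            nlinarith [mul_nonneg hTα (hInonneg t ht), ht.2, ht.1]
    -- simplify innermost sum integral
    have e1 : ∀ s' : ℝ, (∫ r in α..s', (g r + L * Et)) = I s' + (s' - α) * (L * Et) := by
      intro s'
      rw [intervalIntegral.integral_add (hgint α s') intervalIntegrable_const,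
        intervalIntegral.integral_const, smul_eq_mul]
    simp only [e1] at h
    set Jt : ℝ := ∫ s in α..t, (I s + (s - α) * (L * Et)) with hJt
    have hDcont : Continuous fun s : ℝ => I s + (s - α) * (L * Et) :=
      hIcont.add ((continuous_id.sub continuous_const).mul continuous_const)
    have hJt0 : 0 ≤ Jt := by
      rw [hJt]
      apply intervalIntegral.integral_nonneg ht.1
      intro s hs
      have := hInonneg s ⟨hs.1, le_trans hs.2 ht.2⟩
      have h2 : 0 ≤ (s - α) * (L * Et) :=
        mul_nonneg (by linarith [hs.1]) (mul_nonneg hL hEt0)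
      linarith
    have hJt_le : Jt ≤ (T - α) * (I t + (T - α) * (L * Et)) := by
      rw [hJt]
      calc (∫ s in α..t, (I s + (s - α) * (L * Et)))
          ≤ ∫ s in α..t, (I t + (T - α) * (L * Et)) := by
            apply intervalIntegral.integral_mono_on ht.1
              (hDcont.intervalIntegrable α t) intervalIntegrable_const
            intro s hs
            have h1 := hImono t ht s hs
            have h2 : (s - α) * (L * Et) ≤ (T - α) * (L * Et) :=
              mul_le_mul_of_nonneg_right (by linarith [le_trans hs.2 ht.2])
                (mul_nonneg hL hEt0)
            linarith
        _ = (t - α) * (I t + (T - α) * (L * Et)) := by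
            rw [intervalIntegral.integral_const, smul_eq_mul]
        _ ≤ (T - α) * (I t + (T - α) * (L * Et)) := by
            apply mul_le_mul_of_nonneg_right (by linarith [ht.2])
            have := hInonneg t ht
            have : 0 ≤ (T - α) * (L * Et) := mul_nonneg hTα (mul_nonneg hL hEt0)
            linarith [hInonneg t ht]
      -- simplify outer integral in h
    have e2 : (∫ s in α..t, (g s + L * Jt)) = I t + (t - α) * (L * Jt) := by
      rw [intervalIntegral.integral_add (hgint α t) intervalIntegrable_const,
        intervalIntegral.integral_const, smul_eq_mul]
    rw [e2] at h
    -- now combine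
    have htt : t - α ≤ T - α := by linarith [ht.2]
    have htt0 : 0 ≤ t - α := by linarith [ht.1]
    have hIt := hInonneg t ht
    have step1 : (t - α) * (L * Jt) ≤ (T - α) * (L * Jt) :=
      mul_le_mul_of_nonneg_right htt (mul_nonneg hL hJt0)
    have step2 : (T - α) * (L * Jt) ≤ (T - α) * (L * ((T - α) * (I t + (T - α) * (L * Et)))) := by
      apply mul_le_mul_of_nonneg_left _ hTα
      exact mul_le_mul_of_nonneg_left hJt_le hL
    have step3 : (T - α) * (L * ((T - α) * (I t + (T - α) * (L * Et))))
        ≤ (T - α) * (L * ((T - α) * (I t + (T - α) * (L * ((T - α) ^ 2 * I t))))) := by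
      apply mul_le_mul_of_nonneg_left _ hTα
      apply mul_le_mul_of_nonneg_left _ hL
      apply mul_le_mul_of_nonneg_left _ hTα
      have : (T - α) * (L * Et) ≤ (T - α) * (L * ((T - α) ^ 2 * I t)) := by
        apply mul_le_mul_of_nonneg_left _ hTα
        exact mul_le_mul_of_nonneg_left hEt_le hL
      linarith
    have final : L * (I t + (t - α) * (L * Jt)) ≤ M * I t := by
      have h4 : (t - α) * (L * Jt)
          ≤ (T - α) * (L * ((T - α) * (I t + (T - α) * (L * ((T - α) ^ 2 * I t))))) := by
        linarith
      have h5 : L * ((t - α) * (L * Jt))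
          ≤ L * ((T - α) * (L * ((T - α) * (I t + (T - α) * (L * ((T - α) ^ 2 * I t)))))) :=
        mul_le_mul_of_nonneg_left h4 hL
      have h6 : L * ((T - α) * (L * ((T - α) * (I t + (T - α) * (L * ((T - α) ^ 2 * I t))))))
          = (L ^ 2 * (T - α) ^ 2 + L ^ 3 * (T - α) ^ 5) * I t := by ring
      rw [h6] at h5
      have : L * (I t + (t - α) * (L * Jt)) = L * I t + L * ((t - α) * (L * Jt)) := by ring
      rw [this, hM]
      nlinarith [h5]
    calc g t ≤ C + L * (I t + (t - α) * (L * Jt)) := h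
      _ ≤ C + M * I t := by linarith
  -- Gronwall for F = C + M * I
  set F : ℝ → ℝ := fun t => C + M * I t with hF
  have hFnonneg : ∀ t ∈ Icc α T, 0 ≤ F t := by
    intro t ht
    have := hInonneg t ht
    simp only [hF]
    positivity
  have hFderiv : ∀ x ∈ Ico α T, HasDerivWithinAt F (M * g x) (Ici x) x := by
    intro x hx
    have hI' : HasDerivWithinAt I (g x) (Ici x) x :=
      intervalIntegral.integral_hasDerivWithinAt_right (hgint α x)
        (hg.stronglyMeasurableAtFilter _ _) hg.continuousWithinAt
    exact (hI'.const_mul M).const_add C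
  have hgron := norm_le_gronwallBound_of_norm_deriv_right_le
    (f := F) (f' := fun x => M * g x) (δ := C) (K := M) (ε := 0) (a := α) (b := T)
    ((continuous_const.add (continuous_const.mul hIcont)).continuousOn)
    hFderiv
    (by
      simp only [hF, hIdef, Real.norm_eq_abs, intervalIntegral.integral_same, mul_zero, add_zero]
      exact le_of_eq (abs_of_nonneg hC))
    (by
      intro x hx
      have hxT : x ∈ Icc α T := ⟨hx.1, le_of_lt hx.2⟩
      have h1 : |M * g x| = M * g x := abs_of_nonneg (mul_nonneg hM0 (hg0 x hxT))
      have h2 : |F x| = F x := abs_of_nonneg (hFnonneg x hxT)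
      simp only [Real.norm_eq_abs, h1, h2, add_zero]
      exact mul_le_mul_of_nonneg_left (hchain x hxT) hM0)
  intro t ht
  have hgt := hgron t ht
  rw [gronwallBound_ε0, Real.norm_eq_abs, abs_of_nonneg (hFnonneg t ht)] at hgt
  calc g t ≤ F t := hchain t ht
    _ ≤ C * Real.exp (M * (t - α)) := hgt
    _ ≤ Real.exp (M * (T - α)) * C := by
        rw [mul_comm]
        exact mul_le_mul_of_nonneg_right
          (Real.exp_le_exp.mpr (mul_le_mul_of_nonneg_left (by linarith [ht.2]) hM0)) hC

/-- Bykov-type Gronwall inequality with iterated integral terms: the constant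
`K` depends only on `L` and the length `T − α` of the interval. -/
theorem stmt_3 (L : ℝ) (hL : 0 ≤ L) (α T : ℝ) (hαT : α ≤ T) :
    ∃ K : ℝ, ∀ (C : ℝ) (ψ : ℝ → ℝ), 0 ≤ C →
      ContinuousOn ψ (Icc α T) → (∀ t ∈ Icc α T, 0 ≤ ψ t) →
      (∀ t ∈ Icc α T, ψ t ≤ C + L * ∫ s in α..t, ψ s
        + L * ∫ s in α..t, ∫ r in α..s, ψ r
        + L * ∫ s in α..t, ∫ r in α..s, ∫ τ in α..r, ψ τ) →
      ∀ t ∈ Icc α T, ψ t ≤ K * C := by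
  refine ⟨Real.exp ((L + L ^ 2 * (T - α) ^ 2 + L ^ 3 * (T - α) ^ 5) * (T - α)), ?_⟩
  intro C ψ hC hψc hψ0 hineq t ht
  -- extend ψ continuously to all of ℝ
  set g : ℝ → ℝ := fun x => ψ (projIcc α T hαT x) with hgdef
  have hg : Continuous g :=
    (continuousOn_iff_continuous_restrict.mp hψc).comp continuous_projIcc
  have hgψ : ∀ s ∈ Icc α T, g s = ψ s := by
    intro s hs
    simp only [hgdef, projIcc_of_mem hαT hs]
  have hmem : ∀ {a b : ℝ}, b ∈ Icc α T → a ∈ uIcc α b → a ∈ Icc α T := by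
    intro a b hb ha
    rw [uIcc_of_le hb.1] at ha
    exact ⟨ha.1, le_trans ha.2 hb.2⟩
  -- transfer the hypothesis from ψ to g
  have key := aux_gronwall L hL α T hαT C hC g hg
    (fun s hs => (hgψ s hs) ▸ hψ0 s hs)
    (by
      intro t' ht'
      have hE : (∫ s in α..t', ∫ r in α..s, ∫ τ in α..r, g τ)
          = ∫ s in α..t', ∫ r in α..s, ∫ τ in α..r, ψ τ := by
        apply intervalIntegral.integral_congr
        intro s hs
        apply intervalIntegral.integral_congr
        intro r hr
        apply intervalIntegral.integral_congr
        intro τ hτ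
        exact hgψ τ (hmem (hmem (hmem ht' hs) hr) hτ)
      rw [hgψ t' ht', hE]
      have hmid : (∫ s in α..t', ∫ r in α..s,
            (g r + L * ∫ s in α..t', ∫ r in α..s, ∫ τ in α..r, ψ τ))
          = ∫ s in α..t', ∫ r in α..s,
            (ψ r + L * ∫ s in α..t', ∫ r in α..s, ∫ τ in α..r, ψ τ) := by
        apply intervalIntegral.integral_congr
        intro s hs
        apply intervalIntegral.integral_congr
        intro r hr
        simp only [hgψ r (hmem (hmem ht' hs) hr)]
      rw [hmid]
      have houter : (∫ s in α..t',
            (g s + L * ∫ s in α..t', ∫ r in α..s,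
              (ψ r + L * ∫ s in α..t', ∫ r in α..s, ∫ τ in α..r, ψ τ)))
          = ∫ s in α..t',
            (ψ s + L * ∫ s in α..t', ∫ r in α..s,
              (ψ r + L * ∫ s in α..t', ∫ r in α..s, ∫ τ in α..r, ψ τ)) := by
        apply intervalIntegral.integral_congr
        intro s hs
        simp only [hgψ s (hmem ht' hs)]
      rw [houter]
      exact hineq t' ht')
    t ht
  rw [hgψ t ht] at key
  exact key
end

section
/- Let (K_n)_{n∈ℕ} be the compact exhaustion K_n = [−aπ/2, n·aπ/2] of [−aπ/2, ∞), and suppose for each n there exists ε_n > 0 and, for each 0 < ε ≤ ε_n, a function γ_ε^{(n)} : K_n → ℝ⁵ solving a fixed ODE system with fixed initial data at a point of K₁, such that solutions are unique: if γ solves on K_n then its restriction to K_m (m ≤ n) coincides with γ^{(m)}_ε. Then there exists a family (γ_ε)_{ε ∈ (0,1]} of functions defined on all of [−aπ/2, ∞) such that for every compact K ⊂ [−aπ/2, ∞) there is ε_K > 0 with γ_ε solving the ODE system on K for all 0 < ε ≤ ε_K. -/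
open Set Real

/-- Globalization: if for each `n` there is a threshold `ε_n > 0` below which
unique solutions exist on the compact exhaustion `K_n = [−aπ/2, n·aπ/2]`, then
there is a single family `(γ_ε)` defined on all of `[−aπ/2, ∞)` solving the
system on every compact set for all sufficiently small `ε`. -/
theorem stmt_16 (a : ℝ) (ha : 0 < a)
    (SolAt : ℝ → (ℝ → Fin 5 → ℝ) → ℝ → Prop)
    (huniq : ∀ (ε : ℝ) (γ γ' : ℝ → Fin 5 → ℝ) (s : Set ℝ),
      (∀ t ∈ s, SolAt ε γ t) → (∀ t ∈ s, SolAt ε γ' t) → Set.EqOn γ γ' s)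
    (hex : ∀ n : ℕ, ∃ εn > (0:ℝ), ∀ ε, 0 < ε → ε ≤ εn →
      ∃ γ : ℝ → Fin 5 → ℝ, ∀ t ∈ Icc (-(a * π) / 2) (n * (a * π) / 2), SolAt ε γ t) :
    ∃ Γ : ℝ → ℝ → Fin 5 → ℝ, ∀ K : Set ℝ, IsCompact K → K ⊆ Ici (-(a * π) / 2) →
      ∃ εK > (0:ℝ), ∀ ε, 0 < ε → ε ≤ εK → ∀ t ∈ K, SolAt ε (Γ ε) t := by
  classical
  choose E hEpos hEsol using hex
  -- thresholds forced to tend to 0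
  set d : ℕ → ℝ := fun n => min (E n) (1 / (n + 1)) with hd
  have hdpos : ∀ n, 0 < d n := fun n => lt_min (hEpos n) (by positivity)
  have hdE : ∀ n, d n ≤ E n := fun n => min_le_left _ _
  have hdle : ∀ n, d n ≤ 1 / (n + 1) := fun n => min_le_right _ _
  set G : ℕ → ℝ → (ℝ → Fin 5 → ℝ) := fun n ε =>
    if h : 0 < ε ∧ ε ≤ E n then (hEsol n ε h.1 h.2).choose else 0 with hGdef
  refine ⟨fun ε => G (Nat.findGreatest (fun k => ε ≤ d k) ⌈1 / ε⌉₊) ε, ?_⟩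
  intro K hK hKsub
  -- find a level n covering K
  have haπ : 0 < a * π := mul_pos ha pi_pos
  obtain ⟨M, hM⟩ : BddAbove K := hK.bddAbove
  set n : ℕ := ⌈2 * M / (a * π)⌉₊ with hn
  have hcover : K ⊆ Icc (-(a * π) / 2) ((n : ℝ) * (a * π) / 2) := by
    intro t ht
    refine ⟨hKsub ht, ?_⟩
    have h1 : t ≤ M := hM ht
    have h2 : 2 * M / (a * π) ≤ (n : ℝ) := Nat.le_ceil _
    have : 2 * M ≤ (n : ℝ) * (a * π) := by
      calc 2 * M = 2 * M / (a * π) * (a * π) := by field_simp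
        _ ≤ (n : ℝ) * (a * π) := by nlinarith
    nlinarith
  refine ⟨d n, hdpos n, ?_⟩
  intro ε hε hεd t ht
  -- the largest usable level
  set B : ℕ := ⌈1 / ε⌉₊ with hB
  have hnB : n ≤ B := by
    have h1 : ε ≤ 1 / (n + 1) := le_trans hεd (hdle n)
    have h2 : (n : ℝ) + 1 ≤ 1 / ε := by
      rw [le_div_iff₀ hε]
      have := (le_div_iff₀ (by positivity : (0:ℝ) < (n:ℝ) + 1)).mp h1
      linarith
    have h3 : ((n : ℝ) + 1) ≤ (B : ℝ) := le_trans h2 (Nat.le_ceil _)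
    have h4 : n + 1 ≤ B := by exact_mod_cast h3
    omega
  set N : ℕ := Nat.findGreatest (fun k => ε ≤ d k) B with hN
  have hnN : n ≤ N := Nat.le_findGreatest hnB hεd
  have hdN : ε ≤ d N := Nat.findGreatest_spec (P := fun k => ε ≤ d k) hnB hεd
  have hεEN : ε ≤ E N := le_trans hdN (hdE N)
  have hGN : G N ε = (hEsol N ε hε hεEN).choose := by
    rw [hGdef]
    simp only [hε, hεEN, and_self, dif_pos]
  have htN : t ∈ Icc (-(a * π) / 2) ((N : ℝ) * (a * π) / 2) := by
    obtain ⟨h1, h2⟩ := hcover ht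
    refine ⟨h1, le_trans h2 ?_⟩
    have : (n : ℝ) ≤ (N : ℝ) := by exact_mod_cast hnN
    nlinarith
  show SolAt ε (G N ε) t
  rw [hGN]
  exact (hEsol N ε hε hεEN).choose_spec t htN
end
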